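/- Let m,n > 1 and X = ℤ/(m) × ℤ/(n) × ℤ/(m) with σ_{(a,b,c)}(x,y,z) = (x−c, y−1, z−δ_{(a,b),(x−c,y−1)}). The map f : X → ℤ/(n), f(a,b,c) = b, satisfies f(σ_{(a,b,c)}(x,y,z)) = σ'_{f(a,b,c)}(f(x,y,z)) where σ'_i(j) = j−1; hence f is a surjective homomorphism of solutions from (X,r) onto (ℤ/(n), s) with s(i,j) = (j−1, i+1). In particular (X,r) is not a simple solution. -/

import Mathlib

/-- `σ_{(a,b,c)}(x,y,z) = (x−c, y−1, z−δ_{(a,b),(x−c,y−1)})` on `ℤ/(m) × ℤ/(n) × ℤ/(m)`. -/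
def sigmaMN (m n : ℕ) (p q : ZMod m × ZMod n × ZMod m) : ZMod m × ZMod n × ZMod m :=
  (q.1 - p.2.2, q.2.1 - 1,
    q.2.2 - if (p.1, p.2.1) = (q.1 - p.2.2, q.2.1 - 1) then 1 else 0)

/-- `σ⁻¹_{(a,b,c)}(x,y,z) = (x+c, y+1, z+δ_{(a,b),(x,y)})`. -/
def sigmaMNInv (m n : ℕ) (p q : ZMod m × ZMod n × ZMod m) : ZMod m × ZMod n × ZMod m :=
  (q.1 + p.2.2, q.2.1 + 1,
    q.2.2 + if (p.1, p.2.1) = (q.1, q.2.1) then 1 else 0)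

/-- `(Y,s)` is an involutive non-degenerate set-theoretic solution of the YBE. -/
def IsYBSolution {Y : Type*} (s : Y × Y → Y × Y) : Prop :=
  (∀ x : Y, Function.Bijective fun y => (s (x, y)).1) ∧
  (∀ y : Y, Function.Bijective fun x => (s (x, y)).2) ∧
  (s ∘ s = id) ∧
  ((fun t : Y × Y × Y => ((s (t.1, t.2.1)).1, (s (t.1, t.2.1)).2, t.2.2)) ∘
      (fun t : Y × Y × Y => (t.1, (s (t.2.1, t.2.2)).1, (s (t.2.1, t.2.2)).2)) ∘
      (fun t : Y × Y × Y => ((s (t.1, t.2.1)).1, (s (t.1, t.2.1)).2, t.2.2)) =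
    (fun t : Y × Y × Y => (t.1, (s (t.2.1, t.2.2)).1, (s (t.2.1, t.2.2)).2)) ∘
      (fun t : Y × Y × Y => ((s (t.1, t.2.1)).1, (s (t.1, t.2.1)).2, t.2.2)) ∘
      (fun t : Y × Y × Y => (t.1, (s (t.2.1, t.2.2)).1, (s (t.2.1, t.2.2)).2)))

/-- A solution `(Z,r)` is simple: `|Z| > 1` and every epimorphism of solutions from
`(Z,r)` is either an isomorphism or onto a singleton. -/
def IsSimpleSolution {Z : Type*} (r : Z × Z → Z × Z) : Prop :=
  Nontrivial Z ∧
  ∀ (Y : Type) (s : Y × Y → Y × Y), IsYBSolution s →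
    ∀ f : Z → Y, Function.Surjective f →
      (∀ x y : Z, f ((r (x, y)).1) = (s (f x, f y)).1) →
      Function.Bijective f ∨ Subsingleton Y

/-- The map `f(a,b,c) = b` is a surjective homomorphism of solutions onto
`(ℤ/(n), s)` with `s(i,j) = (j−1, i+1)`; in particular `(X,r)` is not simple. -/
theorem sigmaMN_not_simple (m n : ℕ) (hm : 1 < m) (hn : 1 < n) :
    (∀ p q : ZMod m × ZMod n × ZMod m,
      (sigmaMN m n p q).2.1 =
        ((fun t : ZMod n × ZMod n => (t.2 - 1, t.1 + 1)) (p.2.1, q.2.1)).1) ∧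
    Function.Surjective (fun q : ZMod m × ZMod n × ZMod m => q.2.1) ∧
    ¬ IsSimpleSolution (fun t : (ZMod m × ZMod n × ZMod m) × (ZMod m × ZMod n × ZMod m) =>
        (sigmaMN m n t.1 t.2, sigmaMNInv m n (sigmaMN m n t.1 t.2) t.1)) := by

  haveI : Fact (1 < m) := ⟨hm⟩
  haveI : Fact (1 < n) := ⟨hn⟩
  refine ⟨fun p q => rfl, fun b => ⟨(0, b, 0), rfl⟩, fun hsimp => ?_⟩
  have hYB : IsYBSolution (fun t : ZMod n × ZMod n => (t.2 - 1, t.1 + 1)) := by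
    refine ⟨fun x => ⟨fun a b h => by simpa using h, fun y => ⟨y + 1, by simp⟩⟩,
      fun y => ⟨fun a b h => by simpa using h, fun x => ⟨x - 1, by simp⟩⟩, ?_, ?_⟩
    · funext t; simp
    · funext t; obtain ⟨a, b, c⟩ := t
      simp only [Function.comp_apply, Prod.mk.injEq]
      exact ⟨trivial, by ring, trivial⟩
  rcases hsimp.2 (ZMod n) _ hYB (fun q => q.2.1) (fun b => ⟨(0, b, 0), rfl⟩)
      (fun x y => rfl) with hbij | hsub
  · have h01 : (0 : ZMod m) ≠ 1 := zero_ne_one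
    have := hbij.1 (a₁ := ((0 : ZMod m), (0 : ZMod n), (0 : ZMod m)))
      (a₂ := ((1 : ZMod m), (0 : ZMod n), (0 : ZMod m))) rfl
    exact h01 (congrArg Prod.fst this)
  · exact zero_ne_one (hsub.elim (0 : ZMod n) 1)
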